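/- arXiv:2102.02367 — 3 statements merged into one kernel-verified Lean document; each statement's English description precedes it below -/
import Mathlib

section
/- Let f : ℝ → ℝ be three times continuously differentiable on a neighborhood of a point α with f(α) = 0 and f'(α) ≠ 0. Then there exist δ > 0 and a constant C ≥ 0 such that for every starting point x₀ with |x₀ − α| < δ, the Weerakoon–Fernando iteration x_{n+1} = x_n − 2 f(x_n) / ( f'(x_n) + f'(x_n − f(x_n)/f'(x_n)) ) is well defined (all denominators are nonzero), the sequence (x_n) converges to α, and |x_{n+1} − α| ≤ C |x_n − α|³ for all n. -/
open Filter

/-- Mean value inequality on a segment, with the bound only required on the segment. -/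
lemma wfm_mvt_aux {g g' : ℝ → ℝ} {K : Set ℝ} (hK : Convex ℝ K)
    (hg : ∀ t ∈ K, HasDerivAt g (g' t) t)
    {x y : ℝ} (hx : x ∈ K) (hy : y ∈ K) {C : ℝ}
    (hbound : ∀ t ∈ Set.uIcc x y, |g' t| ≤ C) :
    |g y - g x| ≤ C * |y - x| := by
  have hsub : Set.uIcc x y ⊆ K := by
    rw [← segment_eq_uIcc]; exact hK.segment_subset hx hy
  have := Convex.norm_image_sub_le_of_norm_hasDerivWithin_le
    (f := g) (f' := g') (s := Set.uIcc x y) (C := C)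
    (fun t ht => (hg t (hsub ht)).hasDerivWithinAt)
    (fun t ht => by simpa [Real.norm_eq_abs] using hbound t ht)
    (convex_uIcc x y) Set.left_mem_uIcc Set.right_mem_uIcc
  simpa [Real.norm_eq_abs] using this

set_option maxHeartbeats 1600000 in
/-- **Weerakoon–Fernando method, real case.** If `f : ℝ → ℝ` is three times continuously
differentiable on a neighborhood of a simple root `α` (with `f α = 0` and `deriv f α ≠ 0`),
then there are `δ > 0` and `C ≥ 0` such that from any starting point `x₀` with
`|x₀ - α| < δ`, the WFM iteration
`x_{n+1} = x_n - 2 f(x_n) / (f'(x_n) + f'(x_n - f(x_n)/f'(x_n)))`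
is well defined (all denominators nonzero), converges to `α`, and satisfies
`|x_{n+1} - α| ≤ C |x_n - α|³` for all `n`. -/
theorem wfm_real_cubic_convergence
    (f : ℝ → ℝ) (α : ℝ) (s : Set ℝ) (hs : s ∈ nhds α)
    (hf : ContDiffOn ℝ 3 f s)
    (hroot : f α = 0) (hsimple : deriv f α ≠ 0) :
    ∃ δ > 0, ∃ C ≥ (0 : ℝ), ∀ x₀ : ℝ, |x₀ - α| < δ →
      ∀ x : ℕ → ℝ, x 0 = x₀ →
        (∀ n, x (n + 1) =
          x n - 2 * f (x n) /
            (deriv f (x n) + deriv f (x n - f (x n) / deriv f (x n)))) →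
        (∀ n, deriv f (x n) ≠ 0 ∧
            deriv f (x n) + deriv f (x n - f (x n) / deriv f (x n)) ≠ 0) ∧
        Tendsto x atTop (nhds α) ∧
        (∀ n, |x (n + 1) - α| ≤ C * |x n - α| ^ 3) := by
  obtain ⟨U, hUs, hUopen, hαU⟩ := mem_nhds_iff.mp hs
  have hfU : ContDiffOn ℝ 3 f U := hf.mono hUs
  have h1 : ContDiffOn ℝ 2 (deriv f) U := hfU.deriv_of_isOpen (m := 2) hUopen (by norm_num)
  have h2 : ContDiffOn ℝ 1 (deriv (deriv f)) U :=
    h1.deriv_of_isOpen (m := 1) hUopen (by norm_num)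
  have h3cont : ContinuousOn (deriv (deriv (deriv f))) U :=
    h2.continuousOn_deriv_of_isOpen hUopen le_rfl
  have hder_f : ∀ t ∈ U, HasDerivAt f (deriv f t) t := fun t ht =>
    ((hfU.contDiffAt (hUopen.mem_nhds ht)).differentiableAt (by norm_num)).hasDerivAt
  have hder_f1 : ∀ t ∈ U, HasDerivAt (deriv f) (deriv (deriv f) t) t := fun t ht =>
    ((h1.contDiffAt (hUopen.mem_nhds ht)).differentiableAt (by norm_num)).hasDerivAt
  have hder_f2 : ∀ t ∈ U, HasDerivAt (deriv (deriv f)) (deriv (deriv (deriv f)) t) t :=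
    fun t ht =>
    ((h2.contDiffAt (hUopen.mem_nhds ht)).differentiableAt (by norm_num)).hasDerivAt
  set a := |deriv f α| with ha_def
  have ha : 0 < a := abs_pos.mpr hsimple
  have hc1 : ContinuousAt (deriv f) α := h1.continuousOn.continuousAt (hUopen.mem_nhds hαU)
  have hV : ∀ᶠ t in nhds α, a / 2 < |deriv f t| :=
    hc1.abs.eventually (eventually_gt_nhds (by linarith))
  obtain ⟨r, hr0, hrsub⟩ := Metric.nhds_basis_closedBall.mem_iff.mp
    (Filter.inter_mem (hUopen.mem_nhds hαU) hV)
  set K := Metric.closedBall α r with hK_def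
  have hKU : K ⊆ U := fun t ht => (hrsub ht).1
  have hKf1 : ∀ t ∈ K, a / 2 < |deriv f t| := fun t ht => (hrsub ht).2
  have hKconv : Convex ℝ K := convex_closedBall α r
  have hKcomp : IsCompact K := isCompact_closedBall α r
  have hαK : α ∈ K := Metric.mem_closedBall_self hr0.le
  have hmemK : ∀ t : ℝ, |t - α| ≤ r → t ∈ K := fun t ht => by
    rwa [hK_def, Metric.mem_closedBall, Real.dist_eq]
  obtain ⟨M2', hM2'⟩ := hKcomp.exists_bound_of_continuousOn (h2.continuousOn.mono hKU)
  obtain ⟨M3', hM3'⟩ := hKcomp.exists_bound_of_continuousOn (h3cont.mono hKU)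
  set M2 := max M2' 1 with hM2_def
  set M3 := max M3' 1 with hM3_def
  have hM2pos : (0:ℝ) < M2 := lt_of_lt_of_le one_pos (le_max_right _ _)
  have hM3pos : (0:ℝ) < M3 := lt_of_lt_of_le one_pos (le_max_right _ _)
  have hM2 : ∀ t ∈ K, |deriv (deriv f) t| ≤ M2 := fun t ht =>
    le_trans (by simpa [Real.norm_eq_abs] using hM2' t ht) (le_max_left _ _)
  have hM3 : ∀ t ∈ K, |deriv (deriv (deriv f)) t| ≤ M3 := fun t ht =>
    le_trans (by simpa [Real.norm_eq_abs] using hM3' t ht) (le_max_left _ _)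
  -- Lipschitz bound for f'
  have T1f1 : ∀ x ∈ K, ∀ y ∈ K, |deriv f y - deriv f x| ≤ M2 * |y - x| := by
    intro x hx y hy
    exact wfm_mvt_aux hKconv (fun t ht => hder_f1 t (hKU ht)) hx hy
      (fun t ht => hM2 t (by
        rw [← segment_eq_uIcc] at ht
        exact hKconv.segment_subset hx hy ht))
  -- Lipschitz bound for f''
  have T1 : ∀ x ∈ K, ∀ y ∈ K, |deriv (deriv f) y - deriv (deriv f) x| ≤ M3 * |y - x| := by
    intro x hx y hy
    exact wfm_mvt_aux hKconv (fun t ht => hder_f2 t (hKU ht)) hx hy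
      (fun t ht => hM3 t (by
        rw [← segment_eq_uIcc] at ht
        exact hKconv.segment_subset hx hy ht))
  -- first order Taylor estimate for f'
  have T2 : ∀ x ∈ K, ∀ y ∈ K,
      |deriv f y - deriv f x - (y - x) * deriv (deriv f) x| ≤ M3 * |y - x| ^ 2 := by
    intro x hx y hy
    have hsubK : Set.uIcc x y ⊆ K := by
      rw [← segment_eq_uIcc]; exact hKconv.segment_subset hx hy
    have key := wfm_mvt_aux (g := fun t => deriv f t - deriv f x - (t - x) * deriv (deriv f) x)
      (g' := fun t => deriv (deriv f) t - deriv (deriv f) x) hKconv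
      (fun t ht => by
        have hlin : HasDerivAt (fun u : ℝ => deriv f x + (u - x) * deriv (deriv f) x)
            (deriv (deriv f) x) t := by
          simpa using (((hasDerivAt_id t).sub_const x).mul_const
            (deriv (deriv f) x)).const_add (deriv f x)
        have h' := (hder_f1 t (hKU ht)).sub hlin
        have hfun : (fun u : ℝ => deriv f u - (deriv f x + (u - x) * deriv (deriv f) x))
            = fun u : ℝ => deriv f u - deriv f x - (u - x) * deriv (deriv f) x := by
          funext u; ring
        rw [← hfun]
        exact h')
      hx hy (C := M3 * |y - x|)
      (fun t ht => by
        calc |deriv (deriv f) t - deriv (deriv f) x| ≤ M3 * |t - x| :=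
              T1 x hx t (hsubK ht)
          _ ≤ M3 * |y - x| := by
              have := Set.abs_sub_left_of_mem_uIcc ht
              gcongr)
    have hzero : deriv f x - deriv f x - (x - x) * deriv (deriv f) x = 0 := by ring
    calc |deriv f y - deriv f x - (y - x) * deriv (deriv f) x|
        = |(deriv f y - deriv f x - (y - x) * deriv (deriv f) x)
            - (deriv f x - deriv f x - (x - x) * deriv (deriv f) x)| := by rw [hzero, sub_zero]
      _ ≤ M3 * |y - x| * |y - x| := key
      _ = M3 * |y - x| ^ 2 := by ring
  -- second order Taylor estimate for f
  have T3 : ∀ x ∈ K, ∀ y ∈ K,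
      |f y - f x - (y - x) * deriv f x - (y - x) ^ 2 / 2 * deriv (deriv f) x|
        ≤ M3 * |y - x| ^ 3 := by
    intro x hx y hy
    have hsubK : Set.uIcc x y ⊆ K := by
      rw [← segment_eq_uIcc]; exact hKconv.segment_subset hx hy
    have key := wfm_mvt_aux
      (g := fun t => f t - f x - (t - x) * deriv f x - (t - x) ^ 2 / 2 * deriv (deriv f) x)
      (g' := fun t => deriv f t - deriv f x - (t - x) * deriv (deriv f) x)
      (K := K) hKconv
      (fun t ht => by
        have ha1 : HasDerivAt (fun u : ℝ => f x + (u - x) * deriv f x) (deriv f x) t := by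
          simpa using (((hasDerivAt_id t).sub_const x).mul_const (deriv f x)).const_add (f x)
        have ha2 : HasDerivAt (fun u : ℝ => (u - x) ^ 2 / 2 * deriv (deriv f) x)
            ((t - x) * deriv (deriv f) x) t := by
          have h0 := ((((hasDerivAt_id t).sub_const x).pow 2).div_const 2).mul_const
            (deriv (deriv f) x)
          refine h0.congr_deriv ?_
          simp
        have h' := (hder_f t (hKU ht)).sub (ha1.add ha2)
        have hfun : (fun u : ℝ => f u
              - (f x + (u - x) * deriv f x + (u - x) ^ 2 / 2 * deriv (deriv f) x))
            = fun u : ℝ => f u - f x - (u - x) * deriv f x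
              - (u - x) ^ 2 / 2 * deriv (deriv f) x := by
          funext u; ring
        have heqv : deriv f t - (deriv f x + (t - x) * deriv (deriv f) x)
            = deriv f t - deriv f x - (t - x) * deriv (deriv f) x := by ring
        rw [← hfun, ← heqv]
        exact h')
      hx hy (C := M3 * |y - x| ^ 2)
      (fun t ht => by
        calc |deriv f t - deriv f x - (t - x) * deriv (deriv f) x|
            ≤ M3 * |t - x| ^ 2 := T2 x hx t (hsubK ht)
          _ ≤ M3 * |y - x| ^ 2 := by
              have := Set.abs_sub_left_of_mem_uIcc ht
              have h0 : (0:ℝ) ≤ |t - x| := abs_nonneg _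
              gcongr)
    have hzero : f x - f x - (x - x) * deriv f x - (x - x) ^ 2 / 2 * deriv (deriv f) x = 0 := by
      ring
    calc |f y - f x - (y - x) * deriv f x - (y - x) ^ 2 / 2 * deriv (deriv f) x|
        = |(f y - f x - (y - x) * deriv f x - (y - x) ^ 2 / 2 * deriv (deriv f) x)
            - (f x - f x - (x - x) * deriv f x - (x - x) ^ 2 / 2 * deriv (deriv f) x)| := by
          rw [hzero, sub_zero]
      _ ≤ M3 * |y - x| ^ 2 * |y - x| := key
      _ = M3 * |y - x| ^ 3 := by ring
  -- constants
  set B := M2 / 2 + M3 with hB_def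
  have hBpos : 0 < B := by positivity
  set C0 := 6 * M3 + 2 * B * M2 / a with hC0_def
  have hC0pos : 0 < C0 := by positivity
  set C := C0 / a with hC_def
  have hCpos : 0 < C := by positivity
  set δ := min r (min 1 (min (a / (2 * B)) (min (a / (2 * M2)) (1 / (2 * C + 1))))) with hδ_def
  have hδpos : 0 < δ :=
    lt_min hr0 (lt_min one_pos (lt_min (by positivity) (lt_min (by positivity) (by positivity))))
  have hδr : δ ≤ r := min_le_left _ _
  have hδ1 : δ ≤ 1 := (min_le_right _ _).trans (min_le_left _ _)
  have hδB : δ ≤ a / (2 * B) :=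
    (min_le_right _ _).trans ((min_le_right _ _).trans (min_le_left _ _))
  have hδM2 : δ ≤ a / (2 * M2) :=
    (min_le_right _ _).trans ((min_le_right _ _).trans ((min_le_right _ _).trans
      (min_le_left _ _)))
  have hδC : δ ≤ 1 / (2 * C + 1) :=
    (min_le_right _ _).trans ((min_le_right _ _).trans ((min_le_right _ _).trans
      (min_le_right _ _)))
  clear_value a K M2 M3 B C0 C δ
  -- the key one-step estimate
  have key : ∀ z : ℝ, |z - α| < δ →
      deriv f z ≠ 0 ∧
      (deriv f z + deriv f (z - f z / deriv f z)) ≠ 0 ∧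
      |z - 2 * f z / (deriv f z + deriv f (z - f z / deriv f z)) - α| ≤ C * |z - α| ^ 3 ∧
      |z - 2 * f z / (deriv f z + deriv f (z - f z / deriv f z)) - α| ≤ |z - α| / 2 := by
    intro z hz
    have hzr : |z - α| ≤ r := le_of_lt (lt_of_lt_of_le hz hδr)
    have hzK : z ∈ K := hmemK z hzr
    have hz1 : |z - α| ≤ 1 := le_of_lt (lt_of_lt_of_le hz hδ1)
    have hzB : |z - α| ≤ a / (2 * B) := le_of_lt (lt_of_lt_of_le hz hδB)
    have hzM2 : |z - α| ≤ a / (2 * M2) := le_of_lt (lt_of_lt_of_le hz hδM2)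
    have hzC : |z - α| ≤ 1 / (2 * C + 1) := le_of_lt (lt_of_lt_of_le hz hδC)
    have hp : a / 2 < |deriv f z| := hKf1 z hzK
    have hpne : deriv f z ≠ 0 := by
      intro h
      rw [h, abs_zero] at hp
      linarith
    set A := (z - α) * deriv f z - f z with hA_def
    clear_value A
    have hA3 : |A - (z - α) ^ 2 / 2 * deriv (deriv f) z| ≤ M3 * |z - α| ^ 3 := by
      have h := T3 z hzK α hαK
      rw [hroot] at h
      have heq : (0:ℝ) - f z - (α - z) * deriv f z - (α - z) ^ 2 / 2 * deriv (deriv f) z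
          = A - (z - α) ^ 2 / 2 * deriv (deriv f) z := by rw [hA_def]; ring
      rw [heq, abs_sub_comm α z] at h
      exact h
    have habs3le : |z - α| ^ 3 ≤ |z - α| ^ 2 :=
      pow_le_pow_of_le_one (abs_nonneg _) hz1 (by norm_num)
    have hsq : |z - α| ^ 2 = (z - α) ^ 2 := sq_abs _
    have hA2 : |A| ≤ B * |z - α| ^ 2 := by
      have h1' : |A| ≤ |A - (z - α) ^ 2 / 2 * deriv (deriv f) z|
          + |(z - α) ^ 2 / 2 * deriv (deriv f) z| := by
        calc |A| = |(A - (z - α) ^ 2 / 2 * deriv (deriv f) z)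
              + (z - α) ^ 2 / 2 * deriv (deriv f) z| := congrArg abs (by ring)
          _ ≤ _ := abs_add_le _ _
      have h2' : |(z - α) ^ 2 / 2 * deriv (deriv f) z| ≤ |z - α| ^ 2 / 2 * M2 := by
        rw [abs_mul, abs_of_nonneg (by positivity : (0:ℝ) ≤ (z - α) ^ 2 / 2), ← hsq]
        gcongr
        exact hM2 z hzK
      have h3' : M3 * |z - α| ^ 3 ≤ M3 * |z - α| ^ 2 := by gcongr
      calc |A| ≤ M3 * |z - α| ^ 3 + |z - α| ^ 2 / 2 * M2 := by linarith
        _ ≤ M3 * |z - α| ^ 2 + |z - α| ^ 2 / 2 * M2 := by linarith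
        _ = B * |z - α| ^ 2 := by rw [hB_def]; ring
    have hstar_eq : z - f z / deriv f z - α = A / deriv f z := by
      rw [hA_def]
      field_simp
      ring
    have h2B : |z - α| * (2 * B) ≤ a := (le_div_iff₀ (by linarith)).mp hzB
    have hestar : |z - f z / deriv f z - α| ≤ |z - α| := by
      rw [hstar_eq, abs_div, div_le_iff₀ (abs_pos.mpr hpne)]
      have hBe : B * |z - α| ≤ a / 2 := by
        have heq : B * |z - α| = |z - α| * (2 * B) / 2 := by ring
        rw [heq]
        linarith
      calc |A| ≤ B * |z - α| ^ 2 := hA2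
        _ = (B * |z - α|) * |z - α| := by ring
        _ ≤ (a / 2) * |z - α| := mul_le_mul_of_nonneg_right hBe (abs_nonneg _)
        _ ≤ |deriv f z| * |z - α| := mul_le_mul_of_nonneg_right hp.le (abs_nonneg _)
        _ = |z - α| * |deriv f z| := by ring
    have hzstarK : z - f z / deriv f z ∈ K := hmemK _ (hestar.trans hzr)
    have hq : a / 2 < |deriv f (z - f z / deriv f z)| := hKf1 _ hzstarK
    set q := deriv f (z - f z / deriv f z) with hq_def
    set D := deriv f z + q with hD_def
    clear_value q D
    have hpα : |deriv f z - deriv f α| ≤ M2 * |z - α| := T1f1 α hαK z hzK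
    have hqα : |q - deriv f α| ≤ M2 * |z - α| := by
      have h' := T1f1 α hαK _ hzstarK
      rw [← hq_def] at h'
      exact h'.trans (by gcongr)
    have hM2e : M2 * |z - α| ≤ a / 2 := by
      have h' : |z - α| * (2 * M2) ≤ a := (le_div_iff₀ (by linarith)).mp hzM2
      linarith
    have hDa : a ≤ |D| := by
      have h0 : 2 * deriv f α - D = (deriv f α - deriv f z) + (deriv f α - q) := by
        rw [hD_def]; ring
      have habs : |2 * deriv f α - D| ≤ M2 * |z - α| + M2 * |z - α| := by
        rw [h0]
        refine (abs_add_le _ _).trans ?_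
        rw [abs_sub_comm (deriv f α), abs_sub_comm (deriv f α)]
        exact add_le_add hpα hqα
      have htri := abs_sub_abs_le_abs_sub (2 * deriv f α) D
      have h2a : |2 * deriv f α| = 2 * a := by rw [abs_mul, abs_two, ha_def]
      linarith
    have hDne : D ≠ 0 := by
      intro h
      rw [h, abs_zero] at hDa
      linarith
    have hE2 : |q - deriv f z - ((z - f z / deriv f z) - z) * deriv (deriv f) z|
        ≤ M3 * |(z - f z / deriv f z) - z| ^ 2 := by
      have h' := T2 z hzK _ hzstarK
      rw [← hq_def] at h'
      exact h'
    have hzsz : |(z - f z / deriv f z) - z| ≤ 2 * |z - α| := by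
      have heq : (z - f z / deriv f z) - z = (z - f z / deriv f z - α) - (z - α) := by ring
      rw [heq, sub_eq_add_neg]
      refine (abs_add_le _ _).trans ?_
      rw [abs_neg]
      linarith [hestar]
    set N := (z - α) * D - 2 * f z with hN_def
    clear_value N
    have hNeq : N = (2 * A - (z - α) ^ 2 * deriv (deriv f) z)
        + ((z - α) * A / deriv f z) * deriv (deriv f) z
        + (z - α) * (q - deriv f z - ((z - f z / deriv f z) - z) * deriv (deriv f) z) := by
      rw [hN_def, hD_def, hA_def]
      field_simp
      ring
    have h2A3 : |2 * A - (z - α) ^ 2 * deriv (deriv f) z| ≤ 2 * M3 * |z - α| ^ 3 := by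
      have heq2 : 2 * A - (z - α) ^ 2 * deriv (deriv f) z
          = 2 * (A - (z - α) ^ 2 / 2 * deriv (deriv f) z) := by ring
      rw [heq2, abs_mul, abs_two]
      linarith
    have hmid : |((z - α) * A / deriv f z) * deriv (deriv f) z|
        ≤ 2 * B * M2 / a * |z - α| ^ 3 := by
      rw [abs_mul, abs_div, abs_mul]
      calc |z - α| * |A| / |deriv f z| * |deriv (deriv f) z|
          ≤ |z - α| * (B * |z - α| ^ 2) / (a / 2) * M2 := by
            have hu : |z - α| * |A| ≤ |z - α| * (B * |z - α| ^ 2) :=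
              mul_le_mul_of_nonneg_left hA2 (abs_nonneg _)
            have hv : |z - α| * |A| / |deriv f z| ≤ |z - α| * (B * |z - α| ^ 2) / (a / 2) :=
              div_le_div₀ (mul_nonneg (abs_nonneg _)
                (mul_nonneg hBpos.le (pow_nonneg (abs_nonneg _) 2))) hu (half_pos ha) hp.le
            exact mul_le_mul hv (hM2 z hzK) (abs_nonneg _)
              (div_nonneg (mul_nonneg (abs_nonneg _)
                (mul_nonneg hBpos.le (pow_nonneg (abs_nonneg _) 2))) (by linarith))
        _ = 2 * B * M2 / a * |z - α| ^ 3 := by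
            rw [show |z - α| ^ 3 = |z - α| * (z - α) ^ 2 by rw [← sq_abs]; ring, sq_abs]
            field_simp [ha.ne']
    have hlast : |(z - α) * (q - deriv f z - ((z - f z / deriv f z) - z) * deriv (deriv f) z)|
        ≤ 4 * M3 * |z - α| ^ 3 := by
      rw [abs_mul]
      calc |z - α| * |q - deriv f z - ((z - f z / deriv f z) - z) * deriv (deriv f) z|
          ≤ |z - α| * (M3 * |(z - f z / deriv f z) - z| ^ 2) := by gcongr
        _ ≤ |z - α| * (M3 * (2 * |z - α|) ^ 2) := by gcongr
        _ = 4 * M3 * |z - α| ^ 3 := by ring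
    have hNb : |N| ≤ C0 * |z - α| ^ 3 := by
      have htri : |N| ≤ |2 * A - (z - α) ^ 2 * deriv (deriv f) z|
          + |((z - α) * A / deriv f z) * deriv (deriv f) z|
          + |(z - α) * (q - deriv f z - ((z - f z / deriv f z) - z) * deriv (deriv f) z)| := by
        rw [hNeq]
        exact (abs_add_le _ _).trans (add_le_add_left (abs_add_le _ _) _)
      have hC0eq : C0 * |z - α| ^ 3 = 2 * M3 * |z - α| ^ 3 + 2 * B * M2 / a * |z - α| ^ 3
          + 4 * M3 * |z - α| ^ 3 := by rw [hC0_def]; ring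
      linarith
    have hgα : z - 2 * f z / D - α = N / D := by
      rw [hN_def]
      field_simp
      ring
    have hcubic : |z - 2 * f z / D - α| ≤ C * |z - α| ^ 3 := by
      rw [hgα, abs_div]
      calc |N| / |D| ≤ C0 * |z - α| ^ 3 / a :=
            div_le_div₀ (mul_nonneg hC0pos.le (pow_nonneg (abs_nonneg _) 3)) hNb ha hDa
        _ = C * |z - α| ^ 3 := by rw [hC_def]; ring
    have hhalf : |z - 2 * f z / D - α| ≤ |z - α| / 2 := by
      have h1' : |z - α| * (2 * C + 1) ≤ 1 := (le_div_iff₀ (by linarith)).mp hzC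
      have p1 : C * |z - α| ≤ 1 / 2 := by
        have h0 : (0:ℝ) ≤ |z - α| := abs_nonneg _
        have h2 : |z - α| * (2 * C) + |z - α| ≤ 1 := by
          have : |z - α| * (2 * C + 1) = |z - α| * (2 * C) + |z - α| := by ring
          linarith [h1', this.symm.le, this.le]
        have h3 : C * |z - α| = |z - α| * (2 * C) / 2 := by ring
        linarith
      have p2 : |z - α| ^ 2 ≤ |z - α| := by
        have := pow_le_pow_of_le_one (abs_nonneg (z - α)) hz1 (show 1 ≤ 2 by norm_num)
        simpa using this
      have p3 : C * |z - α| ^ 3 ≤ |z - α| / 2 := by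
        calc C * |z - α| ^ 3 = (C * |z - α|) * |z - α| ^ 2 := by ring
          _ ≤ (1 / 2) * |z - α| ^ 2 :=
              mul_le_mul_of_nonneg_right p1 (pow_nonneg (abs_nonneg _) 2)
          _ ≤ (1 / 2) * |z - α| := by linarith
          _ = |z - α| / 2 := by ring
      linarith [hcubic]
    exact ⟨hpne, hDne, hcubic, hhalf⟩
  -- conclusion
  refine ⟨δ, hδpos, C, hCpos.le, ?_⟩
  intro x₀ hx₀ x hx0 hrec
  have hinv : ∀ n, |x n - α| < δ := by
    intro n
    induction n with
    | zero => rw [hx0]; exact hx₀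
    | succ n ih =>
      have k := key (x n) ih
      rw [hrec n]
      calc |x n - 2 * f (x n) / (deriv f (x n) + deriv f (x n - f (x n) / deriv f (x n))) - α|
          ≤ |x n - α| / 2 := k.2.2.2
        _ ≤ |x n - α| := half_le_self (abs_nonneg _)
        _ < δ := ih
  refine ⟨fun n => ⟨(key (x n) (hinv n)).1, (key (x n) (hinv n)).2.1⟩, ?_, fun n => by
    rw [hrec n]; exact (key (x n) (hinv n)).2.2.1⟩
  have hhalfstep : ∀ n, |x (n + 1) - α| ≤ |x n - α| / 2 := fun n => by
    rw [hrec n]; exact (key (x n) (hinv n)).2.2.2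
  have hgeo : ∀ n, |x n - α| ≤ (1 / 2) ^ n * |x₀ - α| := by
    intro n
    induction n with
    | zero => rw [hx0]; simp
    | succ n ih =>
      calc |x (n + 1) - α| ≤ |x n - α| / 2 := hhalfstep n
        _ ≤ ((1 / 2) ^ n * |x₀ - α|) / 2 := by linarith
        _ = (1 / 2) ^ (n + 1) * |x₀ - α| := by ring
  rw [tendsto_iff_dist_tendsto_zero]
  have hlim : Tendsto (fun n : ℕ => (1 / 2 : ℝ) ^ n * |x₀ - α|) atTop (nhds 0) := by
    have := (tendsto_pow_atTop_nhds_zero_of_lt_one (by norm_num : (0:ℝ) ≤ 1 / 2)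
      (by norm_num : (1 / 2 : ℝ) < 1)).mul_const |x₀ - α|
    simpa using this
  exact squeeze_zero (fun n => dist_nonneg)
    (fun n => by rw [Real.dist_eq]; exact hgeo n) hlim
end

section
/- Let f : ℂ → ℂ be analytic on a neighborhood of a point z* with f(z*) = 0 and f'(z*) ≠ 0. Then there exist δ > 0 and a constant C ≥ 0 such that for every starting point z₀ with |z₀ − z*| < δ, the complex Weerakoon–Fernando iteration z_{n+1} = z_n − 2 f(z_n)/( f'(z_n) + f'(z_n − f(z_n)/f'(z_n)) ) is well defined (all denominators are nonzero), the sequence (z_n) converges to z*, and |z_{n+1} − z*| ≤ C |z_n − z*|³ for all n. -/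
open Set Metric

lemma wfm_seg_aux {x y t : ℂ} (ht : t ∈ segment ℝ x y) : ‖t - x‖ ≤ ‖y - x‖ := by
  obtain ⟨a, b, ha, hb, hab, rfl⟩ := ht
  have h1 : a • x + b • y - x = b • (y - x) := by
    have : a = 1 - b := by linarith
    subst this; module
  rw [h1, norm_smul]
  simp only [Real.norm_eq_abs, abs_of_nonneg hb]
  nlinarith [norm_nonneg (y - x)]

lemma wfm_taylor_aux {u : ℂ → ℂ} {s : Set ℂ} (hs : Convex ℝ s)
    (hd : ∀ t ∈ s, DifferentiableAt ℂ u t) {M : ℝ} (hM0 : 0 ≤ M)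
    (hM : ∀ p ∈ s, ∀ q ∈ s, ‖deriv u p - deriv u q‖ ≤ M * ‖p - q‖)
    {x y : ℂ} (hx : x ∈ s) (hy : y ∈ s) :
    ‖u y - u x - (y - x) * deriv u x‖ ≤ M * ‖y - x‖ ^ 2 := by
  set φ : ℂ → ℂ := fun t => u t - t * deriv u x with hφ
  have hseg : segment ℝ x y ⊆ s := hs.segment_subset hx hy
  have key : ‖φ y - φ x‖ ≤ M * ‖y - x‖ * ‖y - x‖ := by
    apply Convex.norm_image_sub_le_of_norm_hasDerivWithin_le
      (f' := fun t => deriv u t - deriv u x)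
      (fun t htt => ?_) (fun t htt => ?_) (convex_segment x y)
      (left_mem_segment ℝ x y) (right_mem_segment ℝ x y)
    · have h := (hd t (hseg htt)).hasDerivAt.sub ((hasDerivAt_id t).mul_const (deriv u x))
      rw [one_mul] at h
      exact h.hasDerivWithinAt
    · calc ‖deriv u t - deriv u x‖ ≤ M * ‖t - x‖ := hM t (hseg htt) x hx
        _ ≤ M * ‖y - x‖ := mul_le_mul_of_nonneg_left (wfm_seg_aux htt) hM0
  calc ‖u y - u x - (y - x) * deriv u x‖ = ‖φ y - φ x‖ := by rw [hφ]; ring_nf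
    _ ≤ M * ‖y - x‖ * ‖y - x‖ := key
    _ = M * ‖y - x‖ ^ 2 := by ring


open Filter

set_option maxHeartbeats 1000000 in
/-- **Weerakoon–Fernando method, complex case.** If `f : ℂ → ℂ` is analytic on a
neighborhood of a simple root `z*` (with `f z* = 0` and `deriv f z* ≠ 0`), then there are
`δ > 0` and `C ≥ 0` such that from any starting point `z₀` with `|z₀ - z*| < δ`, the
complex WFM iteration
`z_{n+1} = z_n - 2 f(z_n) / (f'(z_n) + f'(z_n - f(z_n)/f'(z_n)))`
is well defined (all denominators nonzero), converges to `z*`, and satisfies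
`|z_{n+1} - z*| ≤ C |z_n - z*|³` for all `n`. -/
theorem wfm_complex_cubic_convergence
    (f : ℂ → ℂ) (zs : ℂ) (hf : AnalyticAt ℂ f zs)
    (hroot : f zs = 0) (hsimple : deriv f zs ≠ 0) :
    ∃ δ > 0, ∃ C ≥ (0 : ℝ), ∀ z₀ : ℂ, ‖z₀ - zs‖ < δ →
      ∀ z : ℕ → ℂ, z 0 = z₀ →
        (∀ n, z (n + 1) =
          z n - 2 * f (z n) /
            (deriv f (z n) + deriv f (z n - f (z n) / deriv f (z n)))) →
        (∀ n, deriv f (z n) ≠ 0 ∧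
            deriv f (z n) + deriv f (z n - f (z n) / deriv f (z n)) ≠ 0) ∧
        Tendsto z atTop (nhds zs) ∧
        (∀ n, ‖z (n + 1) - zs‖ ≤ C * ‖z n - zs‖ ^ 3) := by
  set u := dslope f zs with hu_def
  have hu : AnalyticAt ℂ u zs := by
    obtain ⟨p, hp⟩ := hf
    exact hp.has_fpower_series_dslope_fslope.analyticAt
  have hfu : ∀ z : ℂ, f z = (z - zs) * u z := by
    intro z
    have h := sub_smul_dslope f zs z
    rw [hroot, sub_zero] at h
    simpa [smul_eq_mul] using h.symm
  have hua : u zs = deriv f zs := dslope_same f zs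
  -- neighborhood of analyticity
  obtain ⟨r0, hr00, hr0⟩ : ∃ r0 > 0, ∀ y ∈ ball zs r0, AnalyticAt ℂ u y := by
    obtain ⟨r0, hr00, h⟩ := Metric.eventually_nhds_iff_ball.mp hu.eventually_analyticAt
    exact ⟨r0, hr00, h⟩
  set r := r0 / 2 with hr_def
  have hr : 0 < r := by positivity
  have hSsub : closedBall zs r ⊆ ball zs r0 := by
    apply closedBall_subset_ball; rw [hr_def]; linarith
  have hAnOn : AnalyticOnNhd ℂ u (ball zs r0) := hr0
  have hAd : AnalyticOnNhd ℂ (deriv u) (ball zs r0) := hAnOn.deriv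
  have hAdd : AnalyticOnNhd ℂ (deriv (deriv u)) (ball zs r0) := hAd.deriv
  -- differentiability on the closed ball
  have hdiff : ∀ t ∈ closedBall zs r, DifferentiableAt ℂ u t :=
    fun t ht => (hAnOn t (hSsub ht)).differentiableAt
  have hdiffd : ∀ t ∈ closedBall zs r, DifferentiableAt ℂ (deriv u) t :=
    fun t ht => (hAd t (hSsub ht)).differentiableAt
  -- the derivative formula
  have hderiv : ∀ x ∈ closedBall zs r, deriv f x = u x + (x - zs) * deriv u x := by
    intro x hx
    have h1 : HasDerivAt (fun t : ℂ => t - zs) 1 x := by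
      simpa using (hasDerivAt_id x).sub_const zs
    have h2 : HasDerivAt u (deriv u x) x := (hdiff x hx).hasDerivAt
    have h3 : HasDerivAt f (1 * u x + (x - zs) * deriv u x) x := by
      have := h1.mul h2
      refine HasDerivAt.congr_of_eventuallyEq this ?_
      filter_upwards with t using hfu t
    rw [h3.deriv, one_mul]
  -- bounds
  obtain ⟨M1, hM1⟩ := (isCompact_closedBall zs r).exists_bound_of_continuousOn
    (fun t ht => ((hAd t (hSsub ht)).continuousAt).continuousWithinAt)
  obtain ⟨M2, hM2⟩ := (isCompact_closedBall zs r).exists_bound_of_continuousOn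
    (fun t ht => ((hAdd t (hSsub ht)).continuousAt).continuousWithinAt)
  set M := max 1 (max M1 M2) with hM_def
  have hM1' : ∀ t ∈ closedBall zs r, ‖deriv u t‖ ≤ M :=
    fun t ht => (hM1 t ht).trans (le_max_of_le_right (le_max_left _ _))
  have hM2' : ∀ t ∈ closedBall zs r, ‖deriv (deriv u) t‖ ≤ M :=
    fun t ht => (hM2 t ht).trans (le_max_of_le_right (le_max_right _ _))
  have hM_ge1 : (1:ℝ) ≤ M := le_max_left _ _
  have hM0 : (0:ℝ) < M := lt_of_lt_of_le one_pos hM_ge1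
  -- Lipschitz facts
  have hLip_u : ∀ p ∈ closedBall zs r, ∀ q ∈ closedBall zs r, ‖u p - u q‖ ≤ M * ‖p - q‖ := by
    intro p hp q hq
    exact Convex.norm_image_sub_le_of_norm_deriv_le hdiff hM1' (convex_closedBall zs r) hq hp
  have hLip_du : ∀ p ∈ closedBall zs r, ∀ q ∈ closedBall zs r,
      ‖deriv u p - deriv u q‖ ≤ M * ‖p - q‖ := by
    intro p hp q hq
    exact Convex.norm_image_sub_le_of_norm_deriv_le hdiffd hM2' (convex_closedBall zs r) hq hp
  set a := deriv f zs with ha_def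
  set A := ‖a‖ with hA_def
  have hA0 : 0 < A := norm_pos_iff.mpr hsimple
  set K := 2*M + 4*M^2/A with hK_def
  have hK0 : 0 < K := by positivity
  set C := K / A with hC_def
  have hC0 : 0 < C := by positivity
  set δ := min r (min (A/(4*M)) (Real.sqrt (1/(2*C)))) with hδ_def
  have hδ0 : 0 < δ := by
    apply lt_min hr
    apply lt_min (by positivity)
    exact Real.sqrt_pos.mpr (by positivity)
  have hzsS : zs ∈ closedBall zs r := mem_closedBall_self hr.le
  -- the key step estimate
  have key : ∀ x : ℂ, ‖x - zs‖ < δ →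
      deriv f x ≠ 0 ∧ (deriv f x + deriv f (x - f x / deriv f x)) ≠ 0 ∧
      ‖(x - 2 * f x / (deriv f x + deriv f (x - f x / deriv f x))) - zs‖
        ≤ C * ‖x - zs‖ ^ 3 := by
    intro x hx
    set w := x - zs with hw_def
    set ω := ‖w‖ with hω_def
    have hω0 : 0 ≤ ω := norm_nonneg _
    have hωr : ω ≤ r := le_of_lt (lt_of_lt_of_le hx (min_le_left _ _))
    have hωA : ω ≤ A/(4*M) :=
      le_of_lt (lt_of_lt_of_le hx ((min_le_right _ _).trans (min_le_left _ _)))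
    have h4M : 4*M*ω ≤ A := by
      rw [le_div_iff₀ (by positivity)] at hωA; linarith
    have hxS : x ∈ closedBall zs r := by
      rw [mem_closedBall, Complex.dist_eq]; exact hωr
    have hux : ‖u x - u zs‖ ≤ M * ω := hLip_u x hxS zs hzsS
    have hdux : ‖deriv u x‖ ≤ M := hM1' x hxS
    have hfdx : deriv f x = u x + w * deriv u x := hderiv x hxS
    have hfdx_a : ‖deriv f x - a‖ ≤ 2*M*ω := by
      have h : deriv f x - a = (u x - u zs) + w * deriv u x := by
        rw [hfdx, hua]; ring
      rw [h]
      calc ‖(u x - u zs) + w * deriv u x‖ ≤ ‖u x - u zs‖ + ‖w * deriv u x‖ := norm_add_le _ _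
        _ ≤ M * ω + ω * M := by
            rw [norm_mul]
            exact add_le_add hux (mul_le_mul_of_nonneg_left hdux hω0)
        _ = 2*M*ω := by ring
    have hDx : A/2 ≤ ‖deriv f x‖ := by
      have h1 := norm_sub_norm_le a (deriv f x)
      rw [norm_sub_rev] at h1
      linarith
    have hDx0 : deriv f x ≠ 0 := by
      intro h
      rw [h, norm_zero] at hDx; linarith
    -- Newton point
    set N := x - f x / deriv f x with hN_def
    have hNzs : N - zs = w * (w * deriv u x) / deriv f x := by
      rw [hN_def, hfu x, hfdx]
      rw [hfdx] at hDx0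
      field_simp
      ring
    have hs1 : ‖N - zs‖ ≤ 2*M/A * ω^2 := by
      have hnorm : ‖N - zs‖ = ω * (ω * ‖deriv u x‖) / ‖deriv f x‖ := by
        rw [hNzs, norm_div, norm_mul, norm_mul]
      rw [hnorm]
      have hstep : ω * (ω * ‖deriv u x‖) / ‖deriv f x‖ ≤ ω * (ω * M) / (A/2) := by
        apply div_le_div₀ (by positivity)
        · exact mul_le_mul_of_nonneg_left (mul_le_mul_of_nonneg_left hdux hω0) hω0
        · positivity
        · exact hDx
      calc ω * (ω * ‖deriv u x‖) / ‖deriv f x‖ ≤ ω * (ω * M) / (A/2) := hstep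
        _ = 2*M/A * ω^2 := by field_simp
    have hsw : ‖N - zs‖ ≤ ω := by
      have h2 : 2*M/A * ω ≤ 1/2 := by
        rw [div_mul_eq_mul_div, div_le_iff₀ hA0]
        linarith
      calc ‖N - zs‖ ≤ 2*M/A * ω^2 := hs1
        _ = (2*M/A * ω) * ω := by ring
        _ ≤ (1/2) * ω := mul_le_mul_of_nonneg_right h2 hω0
        _ ≤ ω := by linarith
    have hNS : N ∈ closedBall zs r := by
      rw [mem_closedBall, Complex.dist_eq]; exact hsw.trans hωr
    set s := N - zs with hs_def
    have hfdN : deriv f N = u N + s * deriv u N := hderiv N hNS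
    have hduN : ‖deriv u N‖ ≤ M := hM1' N hNS
    have huN : ‖u N - u zs‖ ≤ M * ‖s‖ := hLip_u N hNS zs hzsS
    have hfdN_a : ‖deriv f N - a‖ ≤ 2*M*‖s‖ := by
      have h : deriv f N - a = (u N - u zs) + s * deriv u N := by
        rw [hfdN, hua]; ring
      rw [h]
      calc ‖(u N - u zs) + s * deriv u N‖ ≤ ‖u N - u zs‖ + ‖s * deriv u N‖ := norm_add_le _ _
        _ ≤ M * ‖s‖ + ‖s‖ * M := by
            rw [norm_mul]
            exact add_le_add huN (mul_le_mul_of_nonneg_left hduN (norm_nonneg _))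
        _ = 2*M*‖s‖ := by ring
    -- the combined denominator
    set D := deriv f x + deriv f N with hD_def
    have hD2a : ‖D - 2*a‖ ≤ 4*M*ω := by
      have h : D - 2*a = (deriv f x - a) + (deriv f N - a) := by rw [hD_def]; ring
      rw [h]
      calc ‖(deriv f x - a) + (deriv f N - a)‖
          ≤ ‖deriv f x - a‖ + ‖deriv f N - a‖ := norm_add_le _ _
        _ ≤ 2*M*ω + 2*M*‖s‖ := add_le_add hfdx_a hfdN_a
        _ ≤ 2*M*ω + 2*M*ω := by nlinarith
        _ = 4*M*ω := by ring
    have hDlow : A ≤ ‖D‖ := by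
      have h1 := norm_sub_norm_le (2*a) D
      rw [norm_sub_rev] at h1
      have h2 : ‖(2:ℂ)*a‖ = 2*A := by
        rw [norm_mul]; simp [hA_def]
      linarith
    have hD0 : D ≠ 0 := by
      intro h; rw [h, norm_zero] at hDlow; linarith
    refine ⟨hDx0, hD0, ?_⟩
    -- error formula
    have hE : (x - 2 * f x / D) - zs = w * (D - 2 * u x) / D := by
      rw [hfu x]
      field_simp
      ring
    -- numerator estimate
    have hNum : D - 2 * u x =
        w * (deriv u x - deriv u zs) + s * deriv u N + (u N - u zs)
          - (u x - u zs - w * deriv u zs) := by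
      rw [hD_def, hfdx, hfdN]; ring
    have hTay : ‖u x - u zs - w * deriv u zs‖ ≤ M * ω^2 := by
      have := wfm_taylor_aux (convex_closedBall zs r) hdiff hM0.le hLip_du hzsS hxS
      simpa [hw_def] using this
    have hdu_lip : ‖deriv u x - deriv u zs‖ ≤ M * ω := hLip_du x hxS zs hzsS
    have hNumB : ‖D - 2 * u x‖ ≤ K * ω^2 := by
      rw [hNum]
      have t1 : ‖w * (deriv u x - deriv u zs)‖ ≤ ω * (M * ω) := by
        rw [norm_mul]; exact mul_le_mul_of_nonneg_left hdu_lip hω0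
      have t2 : ‖s * deriv u N‖ ≤ (2*M/A * ω^2) * M := by
        rw [norm_mul]
        exact mul_le_mul hs1 hduN (norm_nonneg _) (by positivity)
      have t3 : ‖u N - u zs‖ ≤ M * (2*M/A * ω^2) := by
        calc ‖u N - u zs‖ ≤ M * ‖s‖ := huN
          _ ≤ M * (2*M/A * ω^2) := mul_le_mul_of_nonneg_left hs1 hM0.le
      calc ‖w * (deriv u x - deriv u zs) + s * deriv u N + (u N - u zs)
            - (u x - u zs - w * deriv u zs)‖
          ≤ ‖w * (deriv u x - deriv u zs) + s * deriv u N + (u N - u zs)‖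
            + ‖u x - u zs - w * deriv u zs‖ := norm_sub_le _ _
        _ ≤ (‖w * (deriv u x - deriv u zs) + s * deriv u N‖ + ‖u N - u zs‖)
            + ‖u x - u zs - w * deriv u zs‖ := by
              gcongr; exact norm_add_le _ _
        _ ≤ ((‖w * (deriv u x - deriv u zs)‖ + ‖s * deriv u N‖) + ‖u N - u zs‖)
            + ‖u x - u zs - w * deriv u zs‖ := by
              gcongr; exact norm_add_le _ _
        _ ≤ ((ω * (M * ω) + (2*M/A * ω^2) * M) + M * (2*M/A * ω^2)) + M * ω^2 := by
              gcongr
        _ = K * ω^2 := by rw [hK_def]; field_simp; ring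
    -- conclude
    rw [hE]
    have hfinal : ‖w * (D - 2 * u x) / D‖ ≤ ω * (K * ω^2) / A := by
      rw [norm_div, norm_mul]
      apply div_le_div₀ (by positivity)
        (mul_le_mul_of_nonneg_left hNumB hω0) hA0 hDlow
    calc ‖w * (D - 2 * u x) / D‖ ≤ ω * (K * ω^2) / A := hfinal
      _ = C * ω^3 := by rw [hC_def]; field_simp
  have hcontr : C * δ^2 ≤ 1/2 := by
    have h1 : δ ≤ Real.sqrt (1/(2*C)) := (min_le_right _ _).trans (min_le_right _ _)
    have hpos : (0:ℝ) ≤ 1/(2*C) := by positivity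
    have h2 : δ^2 ≤ 1/(2*C) := by
      have hsq := Real.sq_sqrt hpos
      nlinarith [hδ0.le, Real.sqrt_nonneg (1/(2*C))]
    calc C * δ^2 ≤ C * (1/(2*C)) := mul_le_mul_of_nonneg_left h2 hC0.le
      _ = 1/2 := by
        rw [mul_one_div]
        rw [div_eq_div_iff (by positivity) (by norm_num)]
        ring
  refine ⟨δ, hδ0, C, hC0.le, ?_⟩
  intro z₀ hz₀ z hz0 hrec
  have hin : ∀ n, ‖z n - zs‖ < δ := by
    intro n
    induction n with
    | zero => rw [hz0]; exact hz₀
    | succ n ih =>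
      have hk := (key (z n) ih).2.2
      rw [← hrec n] at hk
      have hb : ‖z n - zs‖^2 ≤ δ^2 := by nlinarith [norm_nonneg (z n - zs)]
      calc ‖z (n+1) - zs‖ ≤ C * ‖z n - zs‖^3 := hk
        _ = (C * ‖z n - zs‖^2) * ‖z n - zs‖ := by ring
        _ ≤ (C * δ^2) * ‖z n - zs‖ := by
            apply mul_le_mul_of_nonneg_right _ (norm_nonneg _)
            exact mul_le_mul_of_nonneg_left hb hC0.le
        _ ≤ (1/2) * ‖z n - zs‖ := mul_le_mul_of_nonneg_right hcontr (norm_nonneg _)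
        _ < δ := by nlinarith [norm_nonneg (z n - zs)]
  have hhalf : ∀ n, ‖z (n+1) - zs‖ ≤ (1/2) * ‖z n - zs‖ := by
    intro n
    have hk := (key (z n) (hin n)).2.2
    rw [← hrec n] at hk
    have hb : ‖z n - zs‖^2 ≤ δ^2 := by nlinarith [norm_nonneg (z n - zs), hin n, hδ0]
    calc ‖z (n+1) - zs‖ ≤ C * ‖z n - zs‖^3 := hk
      _ = (C * ‖z n - zs‖^2) * ‖z n - zs‖ := by ring
      _ ≤ (C * δ^2) * ‖z n - zs‖ := by
          apply mul_le_mul_of_nonneg_right _ (norm_nonneg _)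
          exact mul_le_mul_of_nonneg_left hb hC0.le
      _ ≤ (1/2) * ‖z n - zs‖ := mul_le_mul_of_nonneg_right hcontr (norm_nonneg _)
  refine ⟨fun n => ⟨(key (z n) (hin n)).1, (key (z n) (hin n)).2.1⟩, ?_, ?_⟩
  · -- convergence
    have hgeo : ∀ n, ‖z n - zs‖ ≤ (1/2)^n * δ := by
      intro n
      induction n with
      | zero => simpa using (hin 0).le
      | succ n ih =>
        calc ‖z (n+1) - zs‖ ≤ (1/2) * ‖z n - zs‖ := hhalf n
          _ ≤ (1/2) * ((1/2)^n * δ) := by linarith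
          _ = (1/2)^(n+1) * δ := by ring
    rw [tendsto_iff_dist_tendsto_zero]
    have hb : ∀ n, dist (z n) zs ≤ (1/2)^n * δ := by
      intro n
      rw [Complex.dist_eq]
      exact hgeo n
    have hlim : Tendsto (fun n : ℕ => (1/2:ℝ)^n * δ) atTop (nhds 0) := by
      have := (tendsto_pow_atTop_nhds_zero_of_lt_one (by norm_num : (0:ℝ) ≤ 1/2)
        (by norm_num : (1/2:ℝ) < 1)).mul_const δ
      simpa using this
    exact squeeze_zero (fun n => dist_nonneg) hb hlim
  · intro n
    have hk := (key (z n) (hin n)).2.2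
    rw [← hrec n] at hk
    simpa using hk
end

section
/- Let F : ℝᵐ → ℝᵐ be three times continuously differentiable on a neighborhood of a point x* with F(x*) = 0 and the Jacobian J(x*) invertible. Then there exist δ > 0 and a constant C ≥ 0 such that for every starting point x₀ with ‖x₀ − x*‖ < δ, the vector Weerakoon–Fernando iteration, defined by x^λ_{n+1} = x_n − [J(x_n)]⁻¹ F(x_n) followed by x_{n+1} = x_n − 2 [J(x_n) + J(x^λ_{n+1})]⁻¹ F(x_n), is well defined (the relevant Jacobian matrices and their sum are invertible at each step), the sequence (x_n) converges to x*, and ‖x_{n+1} − x*‖ ≤ C ‖x_n − x*‖³ for all n. -/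
open Filter

section aux

open Metric Set ContinuousLinearMap

variable {E : Type*} [NormedAddCommGroup E] [NormedSpace ℝ E]
  {G : Type*} [NormedAddCommGroup G] [NormedSpace ℝ G]

lemma wfm_segment_norm_le {a b z : E} (hz : z ∈ segment ℝ a b) : ‖z - a‖ ≤ ‖b - a‖ := by
  obtain ⟨u, v, hu, hv, huv, rfl⟩ := hz
  have h : u • a + v • b - a = v • (b - a) := by
    have : u = 1 - v := by linarith
    subst this; module
  rw [h, norm_smul, Real.norm_eq_abs, abs_of_nonneg hv]
  nlinarith [norm_nonneg (b - a)]

/-- Quadratic Taylor bound from a Lipschitz derivative, on a convex set. -/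
lemma wfm_taylor1 (f : E → G) (Jf : E → E →L[ℝ] G) (K : NNReal) (t : Set E)
    (hdiff : ∀ z ∈ t, HasFDerivAt f (Jf z) z)
    (hlip : LipschitzOnWith K Jf t) (hconv : Convex ℝ t)
    (a b : E) (ha : a ∈ t) (hb : b ∈ t) :
    ‖f b - f a - Jf a (b - a)‖ ≤ K * ‖b - a‖ * ‖b - a‖ := by
  have seg : segment ℝ a b ⊆ t := hconv.segment_subset ha hb
  have := Convex.norm_image_sub_le_of_norm_hasFDerivWithin_le'
    (f := f) (f' := Jf) (φ := Jf a) (s := segment ℝ a b) (C := K * ‖b - a‖)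
    (fun z hz => (hdiff z (seg hz)).hasFDerivWithinAt)
    (fun z hz => ?_) (convex_segment a b) (left_mem_segment ℝ a b) (right_mem_segment ℝ a b)
  · exact this
  · have h1 : ‖Jf z - Jf a‖ ≤ K * ‖z - a‖ := by
      have := hlip.dist_le_mul z (seg hz) a ha
      simpa [dist_eq_norm] using this
    calc ‖Jf z - Jf a‖ ≤ K * ‖z - a‖ := h1
      _ ≤ K * ‖b - a‖ := by
          gcongr
          exact wfm_segment_norm_le hz

set_option maxHeartbeats 1000000 in
/-- Key one-step lemma for the Weerakoon–Fernando iteration. -/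
lemma wfm_key [CompleteSpace E]
    (F : E → E) (xstar : E) (s : Set E)
    (hs : s ∈ nhds xstar) (hF : ContDiffOn ℝ 3 F s)
    (hroot : F xstar = 0) (hsimple : IsUnit (fderiv ℝ F xstar)) :
    ∃ δ > 0, ∃ C ≥ (0 : ℝ), ∀ z : E, ‖z - xstar‖ < δ →
      IsUnit (fderiv ℝ F z) ∧
      IsUnit (fderiv ℝ F z + fderiv ℝ F (z - (Ring.inverse (fderiv ℝ F z)) (F z))) ∧
      ‖(z - (2 : ℝ) • (Ring.inverse (fderiv ℝ F z +
          fderiv ℝ F (z - (Ring.inverse (fderiv ℝ F z)) (F z)))) (F z)) - xstar‖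
        ≤ C * ‖z - xstar‖ ^ 3 ∧
      C * ‖z - xstar‖ ^ 3 ≤ (1 / 2) * ‖z - xstar‖ := by
  obtain ⟨U, hUs, hUopen, hxU⟩ := _root_.mem_nhds_iff.1 hs
  have hFU : ContDiffOn ℝ 3 F U := hF.mono hUs
  set J : E → E →L[ℝ] E := fderiv ℝ F with hJdef
  set J' : E → E →L[ℝ] E →L[ℝ] E := fderiv ℝ (fderiv ℝ F) with hJ'def
  have hJ2 : ContDiffOn ℝ 2 J U := hFU.fderiv_of_isOpen hUopen (by norm_num)
  have hJ'1 : ContDiffOn ℝ 1 J' U := hJ2.fderiv_of_isOpen hUopen (by norm_num)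
  have hFdiff : ∀ z ∈ U, HasFDerivAt F (J z) z := fun z hz =>
    ((hFU.contDiffAt (hUopen.mem_nhds hz)).differentiableAt (by norm_num)).hasFDerivAt
  have hJdiff : ∀ z ∈ U, HasFDerivAt J (J' z) z := fun z hz =>
    ((hJ2.contDiffAt (hUopen.mem_nhds hz)).differentiableAt (by norm_num)).hasFDerivAt
  have hJcont : ContinuousAt J xstar :=
    (hJ2.contDiffAt (hUopen.mem_nhds hxU)).continuousAt
  -- Lipschitz bounds for J and J' near xstar
  obtain ⟨K₁, t₁, ht₁, hlip₁⟩ :=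
    ((hJ2.contDiffAt (hUopen.mem_nhds hxU)).of_le (by norm_num)).exists_lipschitzOnWith
  obtain ⟨K₂, t₂, ht₂, hlip₂⟩ :=
    (hJ'1.contDiffAt (hUopen.mem_nhds hxU)).exists_lipschitzOnWith
  -- Invertibility + uniform inverse bound near xstar
  have h2unit : IsUnit (2 : E →L[ℝ] E) := by
    have := (isUnit_iff_ne_zero.2 (two_ne_zero : (2:ℝ) ≠ 0)).map (algebraMap ℝ (E →L[ℝ] E))
    rwa [map_ofNat] at this
  have hsum_unit : IsUnit (J xstar + J xstar) := by
    rw [← two_mul]; exact h2unit.mul hsimple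
  set Minv : ℝ := ‖Ring.inverse (J xstar + J xstar)‖ + ‖Ring.inverse (J xstar)‖ + 1 with hMdef
  have hMpos : 0 < Minv := by positivity
  have hWnhds : ∀ a : E →L[ℝ] E, IsUnit a → ‖Ring.inverse a‖ < Minv →
      {b : E →L[ℝ] E | IsUnit b ∧ ‖Ring.inverse b‖ < Minv} ∈ nhds a := by
    intro a ha hlt
    have h1 : {b : E →L[ℝ] E | IsUnit b} ∈ nhds a := ha.unit.nhds
    have h2 : {b : E →L[ℝ] E | ‖Ring.inverse b‖ < Minv} ∈ nhds a := by
      have hc : ContinuousAt (fun b : E →L[ℝ] E => ‖Ring.inverse b‖) a := by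
        exact (NormedRing.inverse_continuousAt ha.unit).norm
      exact hc.eventually_lt continuousAt_const hlt
    exact Filter.inter_mem h1 h2
  have hsumlt : ‖Ring.inverse (J xstar + J xstar)‖ < Minv := by
    rw [hMdef]
    have := norm_nonneg (Ring.inverse (J xstar)); linarith
  have hsinglt : ‖Ring.inverse (J xstar)‖ < Minv := by
    rw [hMdef]
    have := norm_nonneg (Ring.inverse (J xstar + J xstar)); linarith
  -- pair neighborhood for sums
  have hgcont : ContinuousAt (fun p : E × E => J p.1 + J p.2) (xstar, xstar) :=
    (hJcont.comp continuousAt_fst).add (hJcont.comp continuousAt_snd)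
  have hpair : ∀ᶠ p : E × E in nhds (xstar, xstar),
      IsUnit (J p.1 + J p.2) ∧ ‖Ring.inverse (J p.1 + J p.2)‖ < Minv :=
    hgcont.tendsto.eventually (hWnhds _ hsum_unit hsumlt)
  obtain ⟨U1, V1, hU1open, hxU1, hV1open, hxV1, hUV⟩ := mem_nhds_prod_iff'.1 hpair
  have hsingle : ∀ᶠ z : E in nhds xstar, IsUnit (J z) ∧ ‖Ring.inverse (J z)‖ < Minv :=
    hJcont.tendsto.eventually (hWnhds _ hsimple hsinglt)
  -- choose a radius r
  have hnbhd : U ∩ t₁ ∩ t₂ ∩ {z | IsUnit (J z) ∧ ‖Ring.inverse (J z)‖ < Minv} ∩ (U1 ∩ V1)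
      ∈ nhds xstar := by
    refine Filter.inter_mem (Filter.inter_mem (Filter.inter_mem (Filter.inter_mem ?_ ht₁) ht₂)
      hsingle) (Filter.inter_mem (hU1open.mem_nhds hxU1) (hV1open.mem_nhds hxV1))
    exact hUopen.mem_nhds hxU
  obtain ⟨r, hrpos, hrsub⟩ := (Metric.nhds_basis_closedBall.mem_iff).1 hnbhd
  set B : Set E := closedBall xstar r with hBdef
  have hBU : B ⊆ U := fun z hz => ((((hrsub hz).1).1).1).1
  have hBt₁ : B ⊆ t₁ := fun z hz => ((((hrsub hz).1).1).1).2
  have hBt₂ : B ⊆ t₂ := fun z hz => (((hrsub hz).1).1).2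
  have hBsingle : ∀ z ∈ B, IsUnit (J z) ∧ ‖Ring.inverse (J z)‖ < Minv :=
    fun z hz => ((hrsub hz).1).2
  have hBpair : ∀ a ∈ B, ∀ b ∈ B, IsUnit (J a + J b) ∧ ‖Ring.inverse (J a + J b)‖ < Minv := by
    intro a ha b hb
    exact hUV (Set.mk_mem_prod ((hrsub ha).2).1 ((hrsub hb).2).2)
  have hxB : xstar ∈ B := mem_closedBall_self hrpos.le
  have hBconv : Convex ℝ B := convex_closedBall _ _
  -- constants
  set Ky : ℝ := Minv * K₁ with hKydef
  have hKy0 : 0 ≤ Ky := by positivity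
  set C : ℝ := Minv * ((K₁ : ℝ) * Ky + (K₂ : ℝ)) with hCdef
  have hC0 : 0 ≤ C := by positivity
  set δ : ℝ := min r (min (1 / (Ky + 1)) (1 / (2 * (C + 1)))) with hδdef
  have hδpos : 0 < δ := by
    refine lt_min hrpos (lt_min (by positivity) (by positivity))
  have hδr : δ ≤ r := min_le_left _ _
  have hδKy : δ * Ky ≤ 1 := by
    have h1 : δ ≤ 1 / (Ky + 1) := le_trans (min_le_right _ _) (min_le_left _ _)
    calc δ * Ky ≤ (1 / (Ky + 1)) * Ky := mul_le_mul_of_nonneg_right h1 hKy0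
      _ ≤ 1 := by
          rw [div_mul_eq_mul_div, div_le_one (by positivity)]
          linarith
  have hδ1 : δ ≤ 1 := by
    have h1 : δ ≤ 1 / (Ky + 1) := le_trans (min_le_right _ _) (min_le_left _ _)
    have : 1 / (Ky + 1) ≤ 1 := by
      rw [div_le_one (by positivity)]; linarith
    linarith
  have hδC : C * δ ^ 2 ≤ 1 / 2 := by
    have h1 : δ ≤ 1 / (2 * (C + 1)) := le_trans (min_le_right _ _) (min_le_right _ _)
    calc C * δ ^ 2 = C * (δ * δ) := by ring
      _ ≤ C * (1 * (1 / (2 * (C + 1)))) :=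
          mul_le_mul_of_nonneg_left (mul_le_mul hδ1 h1 hδpos.le zero_le_one) hC0
      _ = C / (2 * (C + 1)) := by ring
      _ ≤ 1 / 2 := by
          rw [div_le_div_iff₀ (by positivity) (by norm_num)]
          linarith
  refine ⟨δ, hδpos, C, hC0, fun z hz => ?_⟩
  set e : E := z - xstar with hedef
  have hne : ‖e‖ < δ := hz
  have hzB : z ∈ B := by
    rw [hBdef, mem_closedBall, dist_eq_norm]
    exact le_trans hne.le hδr
  -- the Jacobian at z is a unit
  have hJzunit : IsUnit (J z) := (hBsingle z hzB).1
  have hJzinv : ‖Ring.inverse (J z)‖ ≤ Minv := (hBsingle z hzB).2.le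
  -- Newton point
  set y : E := z - (Ring.inverse (J z)) (F z) with hydef
  -- quadratic Taylor bound for F
  have hQ1 : ∀ a ∈ B, ∀ b ∈ B, ‖F b - F a - J a (b - a)‖ ≤ K₁ * ‖b - a‖ * ‖b - a‖ :=
    fun a ha b hb => wfm_taylor1 F J K₁ B (fun w hw => hFdiff w (hBU hw))
      (hlip₁.mono hBt₁) hBconv a b ha hb
  have hQ2 : ∀ a ∈ B, ∀ b ∈ B, ‖J b - J a - J' a (b - a)‖ ≤ K₂ * ‖b - a‖ * ‖b - a‖ :=
    fun a ha b hb => wfm_taylor1 J J' K₂ B (fun w hw => hJdiff w (hBU hw))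
      (hlip₂.mono hBt₂) hBconv a b ha hb
  -- Newton error
  have hw1 : ‖F z - F xstar - J z (z - xstar)‖ ≤ K₁ * ‖e‖ * ‖e‖ := by
    have := hQ1 z hzB xstar hxB
    have h' : F xstar - F z - J z (xstar - z) = -(F z - F xstar - J z (z - xstar)) := by
      rw [map_sub]; rw [map_sub]; abel
    rw [h', norm_neg] at this
    calc ‖F z - F xstar - J z (z - xstar)‖ ≤ K₁ * ‖xstar - z‖ * ‖xstar - z‖ := this
      _ = K₁ * ‖e‖ * ‖e‖ := by rw [norm_sub_rev]
  have hFz : F z = (F z - F xstar - J z (z - xstar)) + J z e := by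
    rw [hroot]; abel
  have hy_err : ‖y - xstar‖ ≤ Ky * ‖e‖ ^ 2 := by
    have hiJ : (Ring.inverse (J z)) ((J z) e) = e := by
      have := Ring.inverse_mul_cancel (J z) hJzunit
      calc (Ring.inverse (J z)) ((J z) e) = ((Ring.inverse (J z)) * (J z)) e := rfl
        _ = e := by rw [this]; rfl
    have hform : y - xstar = -((Ring.inverse (J z)) (F z - F xstar - J z (z - xstar))) := by
      have h2 : (Ring.inverse (J z)) (F z)
          = (Ring.inverse (J z)) (F z - F xstar - J z (z - xstar)) + e := by
        conv_lhs => rw [hFz]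
        rw [map_add, hiJ]
      rw [hydef, h2, hedef]
      abel
    rw [hform, norm_neg]
    calc ‖(Ring.inverse (J z)) (F z - F xstar - J z (z - xstar))‖
        ≤ ‖Ring.inverse (J z)‖ * ‖F z - F xstar - J z (z - xstar)‖ := le_opNorm _ _
      _ ≤ Minv * (K₁ * ‖e‖ * ‖e‖) := by
          apply mul_le_mul hJzinv hw1 (norm_nonneg _) hMpos.le
      _ = Ky * ‖e‖ ^ 2 := by rw [hKydef]; try ring
  have hy_le_e : ‖y - xstar‖ ≤ ‖e‖ := by
    calc ‖y - xstar‖ ≤ Ky * ‖e‖ ^ 2 := hy_err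
      _ = (Ky * ‖e‖) * ‖e‖ := by ring
      _ ≤ 1 * ‖e‖ := by
          apply mul_le_mul_of_nonneg_right _ (norm_nonneg _)
          calc Ky * ‖e‖ ≤ Ky * δ := mul_le_mul_of_nonneg_left hne.le hKy0
            _ = δ * Ky := by ring
            _ ≤ 1 := hδKy
      _ = ‖e‖ := one_mul _
  have hyB : y ∈ B := by
    rw [hBdef, mem_closedBall, dist_eq_norm]
    exact le_trans hy_le_e (le_trans hne.le hδr)
  have hAunit : IsUnit (J z + J y) := (hBpair z hzB y hyB).1
  have hAinv : ‖Ring.inverse (J z + J y)‖ ≤ Minv := (hBpair z hzB y hyB).2.le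
  -- symmetry of the second derivative
  have hsym : ∀ w ∈ U, (J' w).flip = J' w := by
    intro w hw
    have hsymm : IsSymmSndFDerivAt ℝ F w :=
      (hFU.contDiffAt (hUopen.mem_nhds hw)).isSymmSndFDerivAt (by norm_num)
    ext v u
    simp only [ContinuousLinearMap.flip_apply]
    exact hsymm u v
  -- trapezoid comparison function and its derivative
  set φ : E → E := fun w => F xstar - F w - (2⁻¹ : ℝ) • ((J w) (xstar - w))
      - (2⁻¹ : ℝ) • ((J xstar) (xstar - w)) with hφdef
  set D : E → E →L[ℝ] E := fun w =>
      (2⁻¹ : ℝ) • (J xstar - J w - (J' w) (xstar - w)) with hDdef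
  have hφdiff : ∀ w ∈ U, HasFDerivAt φ (D w) w := by
    intro w hw
    have h1 : HasFDerivAt (fun v : E => xstar - v) (-(ContinuousLinearMap.id ℝ E)) w :=
      (hasFDerivAt_id w).const_sub xstar
    have h2 : HasFDerivAt (fun v => (J v) (xstar - v))
        ((J w).comp (-(ContinuousLinearMap.id ℝ E)) + (J' w).flip (xstar - w)) w :=
      (hJdiff w hw).clm_apply h1
    have h3 : HasFDerivAt (fun v => (J xstar) (xstar - v))
        ((J xstar).comp (-(ContinuousLinearMap.id ℝ E))) w :=
      (J xstar).hasFDerivAt.comp w h1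
    have h4 := (((hasFDerivAt_const (F xstar) w).sub (hFdiff w hw)).sub
        (h2.const_smul (2⁻¹ : ℝ))).sub (h3.const_smul (2⁻¹ : ℝ))
    convert h4 using 1
    · rfl
    rw [hsym w hw]
    ext v
    simp only [hDdef, ContinuousLinearMap.smul_apply, ContinuousLinearMap.sub_apply,
      ContinuousLinearMap.add_apply, ContinuousLinearMap.comp_apply,
      ContinuousLinearMap.neg_apply, ContinuousLinearMap.id_apply,
      ContinuousLinearMap.zero_apply, map_neg]
    module
  have hDbound : ∀ w ∈ B, ‖D w‖ ≤ (K₂ : ℝ) * ‖xstar - w‖ * ‖xstar - w‖ / 2 := by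
    intro w hw
    have := hQ2 w hw xstar hxB
    have hnorm : ‖D w‖ = 2⁻¹ * ‖J xstar - J w - (J' w) (xstar - w)‖ := by
      simp only [hDdef]
      rw [norm_smul (2⁻¹ : ℝ) (J xstar - J w - (J' w) (xstar - w)),
        Real.norm_eq_abs, abs_of_pos (by norm_num : (0:ℝ) < 2⁻¹)]
    rw [hnorm]
    linarith
  have hφx0 : φ xstar = 0 := by
    simp [hφdef]
  have hφbound : ‖φ z‖ ≤ (K₂ : ℝ) / 2 * ‖e‖ ^ 3 := by
    have hseg : segment ℝ xstar z ⊆ B := hBconv.segment_subset hxB hzB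
    have hmvt := Convex.norm_image_sub_le_of_norm_hasFDerivWithin_le
      (f := φ) (f' := D) (s := segment ℝ xstar z) (C := (K₂ : ℝ) * ‖e‖ * ‖e‖ / 2)
      (fun w hw => (hφdiff w (hBU (hseg hw))).hasFDerivWithinAt)
      (fun w hw => ?_) (convex_segment _ _) (left_mem_segment ℝ xstar z)
      (right_mem_segment ℝ xstar z)
    · rw [hφx0, sub_zero] at hmvt
      calc ‖φ z‖ ≤ ((K₂ : ℝ) * ‖e‖ * ‖e‖ / 2) * ‖z - xstar‖ := hmvt
        _ = (K₂ : ℝ) / 2 * ‖e‖ ^ 3 := by rw [← hedef]; ring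
    · have h1 : ‖xstar - w‖ ≤ ‖e‖ := by
        rw [norm_sub_rev]
        calc ‖w - xstar‖ ≤ ‖z - xstar‖ := wfm_segment_norm_le hw
          _ = ‖e‖ := by rw [← hedef]
      calc ‖D w‖ ≤ (K₂ : ℝ) * ‖xstar - w‖ * ‖xstar - w‖ / 2 := hDbound w (hseg hw)
        _ ≤ (K₂ : ℝ) * ‖e‖ * ‖e‖ / 2 := by
            gcongr
  -- final assembly
  have hInvA : ∀ v : E, (Ring.inverse (J z + J y)) ((J z + J y) v) = v := by
    intro v
    have h := Ring.inverse_mul_cancel (J z + J y) hAunit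
    calc (Ring.inverse (J z + J y)) ((J z + J y) v)
        = ((Ring.inverse (J z + J y)) * (J z + J y)) v := rfl
      _ = v := by rw [h]; rfl
  have hiden : (z - (2 : ℝ) • (Ring.inverse (J z + J y)) (F z)) - xstar
      = (Ring.inverse (J z + J y)) ((J z + J y) e - (2 : ℝ) • F z) := by
    rw [map_sub, map_smul, hInvA e, hedef]
    abel
  have halg : (J z + J y) e - (2 : ℝ) • F z = (J y - J xstar) e + (2 : ℝ) • φ z := by
    have hxz : xstar - z = -(z - xstar) := by abel
    simp only [hφdef, hroot, ContinuousLinearMap.add_apply, ContinuousLinearMap.sub_apply,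
      hxz, map_neg, smul_neg, hedef]
    module
  have hJyJ : ‖J y - J xstar‖ ≤ (K₁ : ℝ) * ‖y - xstar‖ := by
    have := hlip₁.dist_le_mul y (hBt₁ hyB) xstar (hBt₁ hxB)
    simpa [dist_eq_norm] using this
  have hmain : ‖(z - (2 : ℝ) • (Ring.inverse (J z + J y)) (F z)) - xstar‖ ≤ C * ‖e‖ ^ 3 := by
    rw [hiden, halg]
    have hin : ‖(J y - J xstar) e + (2 : ℝ) • φ z‖
        ≤ (K₁ : ℝ) * Ky * ‖e‖ ^ 3 + (K₂ : ℝ) * ‖e‖ ^ 3 := by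
      calc ‖(J y - J xstar) e + (2 : ℝ) • φ z‖
          ≤ ‖(J y - J xstar) e‖ + ‖(2 : ℝ) • φ z‖ := norm_add_le _ _
        _ ≤ ‖J y - J xstar‖ * ‖e‖ + 2 * ‖φ z‖ := by
            refine add_le_add (le_opNorm _ _) ?_
            rw [norm_smul, Real.norm_eq_abs, abs_of_pos (by norm_num : (0:ℝ) < 2)]
        _ ≤ ((K₁ : ℝ) * (Ky * ‖e‖ ^ 2)) * ‖e‖ + 2 * ((K₂ : ℝ) / 2 * ‖e‖ ^ 3) := by
            refine add_le_add ?_ (by linarith [hφbound])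
            refine mul_le_mul_of_nonneg_right ?_ (norm_nonneg _)
            exact le_trans hJyJ (mul_le_mul_of_nonneg_left hy_err (K₁ : NNReal).coe_nonneg)
        _ = (K₁ : ℝ) * Ky * ‖e‖ ^ 3 + (K₂ : ℝ) * ‖e‖ ^ 3 := by ring
    calc ‖(Ring.inverse (J z + J y)) ((J y - J xstar) e + (2 : ℝ) • φ z)‖
        ≤ ‖Ring.inverse (J z + J y)‖ * ‖(J y - J xstar) e + (2 : ℝ) • φ z‖ := le_opNorm _ _
      _ ≤ Minv * ((K₁ : ℝ) * Ky * ‖e‖ ^ 3 + (K₂ : ℝ) * ‖e‖ ^ 3) :=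
          mul_le_mul hAinv hin (norm_nonneg _) hMpos.le
      _ = C * ‖e‖ ^ 3 := by rw [hCdef]; ring
  refine ⟨hJzunit, hAunit, hmain, ?_⟩
  have h5 : ‖e‖ ^ 2 ≤ δ ^ 2 := by
    have := pow_le_pow_left₀ (norm_nonneg e) hne.le 2
    exact this
  calc C * ‖e‖ ^ 3 = (C * ‖e‖ ^ 2) * ‖e‖ := by ring
    _ ≤ (1 / 2) * ‖e‖ :=
        mul_le_mul_of_nonneg_right
          (le_trans (mul_le_mul_of_nonneg_left h5 hC0) hδC) (norm_nonneg e)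

end aux

/-- **Weerakoon–Fernando method for systems.** Let `F : ℝᵐ → ℝᵐ` be three times
continuously differentiable on a neighborhood of a point `x*` with `F x* = 0` and the
Jacobian `J x* = fderiv ℝ F x*` invertible. Then there are `δ > 0` and `C ≥ 0` such that
from any starting point `x₀` with `‖x₀ - x*‖ < δ`, the vector WFM iteration
`xλ_{n+1} = x_n - (J x_n)⁻¹ F x_n`,
`x_{n+1} = x_n - 2 (J x_n + J xλ_{n+1})⁻¹ F x_n`
is well defined (the relevant Jacobians and their sum are invertible at each step),
converges to `x*`, and satisfies `‖x_{n+1} - x*‖ ≤ C ‖x_n - x*‖³` for all `n`. -/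
theorem wfm_systems_cubic_convergence
    (m : ℕ) (F : EuclideanSpace ℝ (Fin m) → EuclideanSpace ℝ (Fin m))
    (xstar : EuclideanSpace ℝ (Fin m)) (s : Set (EuclideanSpace ℝ (Fin m)))
    (hs : s ∈ nhds xstar) (hF : ContDiffOn ℝ 3 F s)
    (hroot : F xstar = 0) (hsimple : IsUnit (fderiv ℝ F xstar)) :
    ∃ δ > 0, ∃ C ≥ (0 : ℝ), ∀ x₀ : EuclideanSpace ℝ (Fin m), ‖x₀ - xstar‖ < δ →
      ∀ x : ℕ → EuclideanSpace ℝ (Fin m), x 0 = x₀ →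
        (∀ n, x (n + 1) =
          x n - (2 : ℝ) • (Ring.inverse (fderiv ℝ F (x n) +
              fderiv ℝ F (x n - (Ring.inverse (fderiv ℝ F (x n))) (F (x n)))))
            (F (x n))) →
        (∀ n, IsUnit (fderiv ℝ F (x n)) ∧
            IsUnit (fderiv ℝ F (x n) +
              fderiv ℝ F (x n - (Ring.inverse (fderiv ℝ F (x n))) (F (x n))))) ∧
        Tendsto x atTop (nhds xstar) ∧
        (∀ n, ‖x (n + 1) - xstar‖ ≤ C * ‖x n - xstar‖ ^ 3) := by
  obtain ⟨δ, hδpos, C, hC0, hkey⟩ := wfm_key F xstar s hs hF hroot hsimple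
  refine ⟨δ, hδpos, C, hC0, fun x₀ hx₀ x hx0 hrec => ?_⟩
  have hball : ∀ n, ‖x n - xstar‖ < δ ∧ ‖x n - xstar‖ ≤ (1/2 : ℝ) ^ n * ‖x₀ - xstar‖ := by
    intro n
    induction n with
    | zero => exact ⟨hx0 ▸ hx₀, by rw [hx0]; simp⟩
    | succ n ih =>
      obtain ⟨h1, h2⟩ := ih
      obtain ⟨hu1, hu2, h3, h4⟩ := hkey (x n) h1
      rw [hrec n]
      have hp : (1/2 : ℝ) ^ (n+1) = (1/2) * (1/2 : ℝ) ^ n := by ring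
      have hnn : (0:ℝ) ≤ ‖x n - xstar‖ := norm_nonneg _
      constructor
      · linarith
      · rw [hp]
        linarith
  refine ⟨fun n => ⟨(hkey (x n) (hball n).1).1, (hkey (x n) (hball n).1).2.1⟩, ?_, fun n => ?_⟩
  · rw [tendsto_iff_dist_tendsto_zero]
    have hsq : Tendsto (fun n => (1/2 : ℝ) ^ n * ‖x₀ - xstar‖) atTop (nhds 0) := by
      have h := tendsto_pow_atTop_nhds_zero_of_lt_one
        (by norm_num : (0:ℝ) ≤ 1/2) (by norm_num : (1/2 : ℝ) < 1)
      simpa using h.mul_const ‖x₀ - xstar‖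
    refine squeeze_zero (fun n => dist_nonneg) (fun n => ?_) hsq
    rw [dist_eq_norm]
    exact (hball n).2
  · rw [hrec n]
    exact (hkey (x n) (hball n).1).2.2.1
end
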